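/- The function g satisfies the one-sided (monotonicity) condition (y₂ − y₁)(g(y₂) − g(y₁)) ≤ (y₂ − y₁)² for all y₁, y₂ ∈ ℝ. -/
import Mathlib


open Real

/-- The partition points of Example 2.6: `t 0 = 0`,
`t (2ℓ+1) = t (2ℓ) + π/(ℓ+1)`, `t (2ℓ+2) = t (2ℓ+1) + π`. -/
noncomputable def tseq : ℕ → ℝ
  | 0 => 0
  | k + 1 => tseq k + (if k % 2 = 0 then Real.pi / ((k / 2 + 1 : ℕ) : ℝ) else Real.pi)

lemma tseq_even_succ (ℓ : ℕ) :
    tseq (2 * ℓ + 1) = tseq (2 * ℓ) + Real.pi / ((ℓ : ℝ) + 1) := by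
  show tseq (2 * ℓ) + _ = _
  have h1 : (2 * ℓ) % 2 = 0 := by omega
  have h2 : (2 * ℓ) / 2 = ℓ := by omega
  rw [h1, h2]
  push_cast
  simp

lemma tseq_odd_succ (ℓ : ℕ) :
    tseq (2 * ℓ + 2) = tseq (2 * ℓ + 1) + Real.pi := by
  show tseq (2 * ℓ + 1) + _ = _
  have h1 : (2 * ℓ + 1) % 2 = 1 := by omega
  rw [h1]
  simp

lemma tseq_lt_succ (k : ℕ) : tseq k < tseq (k + 1) := by
  show tseq k < tseq k + _
  have hπ : (0 : ℝ) < Real.pi := Real.pi_pos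
  split
  · have : (0 : ℝ) < ((k / 2 + 1 : ℕ) : ℝ) := by positivity
    have := div_pos hπ this
    linarith
  · linarith

lemma tseq_mono : Monotone tseq :=
  monotone_nat_of_le_succ fun k => (tseq_lt_succ k).le

lemma tseq_lower (k : ℕ) : (k : ℝ) * Real.pi ≤ tseq (2 * k) := by
  induction k with
  | zero => simp [tseq]
  | succ n ih =>
      have h1 : tseq (2 * (n + 1)) = tseq (2 * n + 1) + Real.pi := by
        have := tseq_odd_succ n
        have e : 2 * (n + 1) = 2 * n + 2 := by omega
        rw [e, this]
      have h2 := tseq_even_succ n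
      have hπ : (0 : ℝ) < Real.pi := Real.pi_pos
      have h3 : (0 : ℝ) ≤ Real.pi / ((n : ℝ) + 1) := by positivity
      push_cast
      rw [h1, h2]
      nlinarith

/-- cos is 1-Lipschitz (one-sided form). -/
lemma cos_one_sided (a b : ℝ) : Real.cos a - Real.cos b ≤ |a - b| := by
  calc Real.cos a - Real.cos b ≤ |Real.cos a - Real.cos b| := le_abs_self _
  _ = |(-2) * Real.sin ((a + b) / 2) * Real.sin ((a - b) / 2)| := by
        rw [Real.cos_sub_cos]
  _ ≤ 2 * 1 * |(a - b) / 2| := by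
        rw [abs_mul, abs_mul]
        have h1 : |(-2 : ℝ)| = 2 := by norm_num
        have h2 : |Real.sin ((a + b) / 2)| ≤ 1 := Real.abs_sin_le_one _
        have h3 : |Real.sin ((a - b) / 2)| ≤ |(a - b) / 2| := Real.abs_sin_le_abs
        rw [h1]
        have := abs_nonneg (Real.sin ((a + b) / 2))
        have := abs_nonneg (Real.sin ((a - b) / 2))
        nlinarith [abs_nonneg ((a - b) / 2)]
  _ = |a - b| := by rw [abs_div]; norm_num; ring

/-- The function `g` of Example 2.6 satisfies the one-sided (monotonicity) condition
`(y₂ - y₁)(g(y₂) - g(y₁)) ≤ (y₂ - y₁)²`. -/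
theorem stmt_4 (g : ℝ → ℝ)
    (hneg : ∀ y : ℝ, y < 0 → g y = 1)
    (heven : ∀ (ℓ : ℕ), ∀ y ∈ Set.Ico (tseq (2 * ℓ)) (tseq (2 * ℓ + 1)),
      g y = Real.cos (((ℓ : ℝ) + 1) * (y - tseq (2 * ℓ))))
    (hodd : ∀ (ℓ : ℕ), ∀ y ∈ Set.Ico (tseq (2 * ℓ + 1)) (tseq (2 * ℓ + 2)),
      g y = Real.cos (y - tseq (2 * ℓ + 1) + Real.pi)) :
    ∀ y₁ y₂ : ℝ, (y₂ - y₁) * (g y₂ - g y₁) ≤ (y₂ - y₁) ^ 2 := by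
  have hπ : (0 : ℝ) < Real.pi := Real.pi_pos
  -- value of g on the closed even interval
  have gEven : ∀ ℓ : ℕ, ∀ y ∈ Set.Icc (tseq (2 * ℓ)) (tseq (2 * ℓ + 1)),
      g y = Real.cos (((ℓ : ℝ) + 1) * (y - tseq (2 * ℓ))) := by
    intro ℓ y hy
    rcases lt_or_eq_of_le hy.2 with h | h
    · exact heven ℓ y ⟨hy.1, h⟩
    · have hmem : y ∈ Set.Ico (tseq (2 * ℓ + 1)) (tseq (2 * ℓ + 2)) := by
        refine ⟨h.ge, ?_⟩
        rw [h]; exact tseq_lt_succ _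
      rw [hodd ℓ y hmem, h, tseq_even_succ ℓ]
      have hℓ : ((ℓ : ℝ) + 1) ≠ 0 := by positivity
      have : ((ℓ : ℝ) + 1) * (tseq (2 * ℓ) + Real.pi / ((ℓ : ℝ) + 1) - tseq (2 * ℓ))
          = Real.pi := by field_simp; ring
      rw [this]
      norm_num
  -- value of g on the closed odd interval
  have gOdd : ∀ ℓ : ℕ, ∀ y ∈ Set.Icc (tseq (2 * ℓ + 1)) (tseq (2 * ℓ + 2)),
      g y = Real.cos (y - tseq (2 * ℓ + 1) + Real.pi) := by
    intro ℓ y hy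
    rcases lt_or_eq_of_le hy.2 with h | h
    · exact hodd ℓ y ⟨hy.1, h⟩
    · have e : 2 * ℓ + 2 = 2 * (ℓ + 1) := by omega
      have hmem : y ∈ Set.Icc (tseq (2 * (ℓ + 1))) (tseq (2 * (ℓ + 1) + 1)) := by
        constructor
        · rw [h, e]
        · rw [h, e]; exact (tseq_lt_succ _).le
      have ha : y - tseq (2 * (ℓ + 1)) = 0 := by rw [← e, h, sub_self]
      have hb : y - tseq (2 * ℓ + 1) + Real.pi = 2 * Real.pi := by
        rw [h, tseq_odd_succ]; ring
      rw [gEven (ℓ + 1) y hmem, ha, mul_zero, Real.cos_zero, hb, Real.cos_two_pi]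
  -- one-sided Lipschitz on each closed interval
  have pieceKey : ∀ k : ℕ, ∀ y₁ y₂ : ℝ, tseq k ≤ y₁ → y₁ ≤ y₂ → y₂ ≤ tseq (k + 1) →
      g y₂ - g y₁ ≤ y₂ - y₁ := by
    intro k y₁ y₂ h1 h12 h2
    rcases Nat.even_or_odd k with ⟨ℓ, hℓ⟩ | ⟨ℓ, hℓ⟩
    · -- even interval: g is antitone there
      subst hℓ
      have e : ℓ + ℓ = 2 * ℓ := by ring
      rw [e] at h1 h2
      have hm1 : y₁ ∈ Set.Icc (tseq (2 * ℓ)) (tseq (2 * ℓ + 1)) := ⟨h1, h12.trans h2⟩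
      have hm2 : y₂ ∈ Set.Icc (tseq (2 * ℓ)) (tseq (2 * ℓ + 1)) := ⟨h1.trans h12, h2⟩
      rw [gEven ℓ y₁ hm1, gEven ℓ y₂ hm2]
      have hc : Real.cos (((ℓ : ℝ) + 1) * (y₂ - tseq (2 * ℓ)))
          ≤ Real.cos (((ℓ : ℝ) + 1) * (y₁ - tseq (2 * ℓ))) := by
        apply Real.cos_le_cos_of_nonneg_of_le_pi
        · have : (0 : ℝ) ≤ y₁ - tseq (2 * ℓ) := by linarith
          positivity
        · have hb : y₂ - tseq (2 * ℓ) ≤ Real.pi / ((ℓ : ℝ) + 1) := by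
            have := tseq_even_succ ℓ
            linarith [h2, this]
          have hℓ1 : (0 : ℝ) < (ℓ : ℝ) + 1 := by positivity
          calc ((ℓ : ℝ) + 1) * (y₂ - tseq (2 * ℓ))
              ≤ ((ℓ : ℝ) + 1) * (Real.pi / ((ℓ : ℝ) + 1)) := by
                exact mul_le_mul_of_nonneg_left hb hℓ1.le
            _ = Real.pi := by field_simp
        · have hℓ1 : (0 : ℝ) ≤ (ℓ : ℝ) + 1 := by positivity
          nlinarith
      linarith
    · -- odd interval: use Lipschitz bound
      subst hℓ
      have e : 2 * ℓ + 1 + 1 = 2 * ℓ + 2 := by omega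
      rw [e] at h2
      have hm1 : y₁ ∈ Set.Icc (tseq (2 * ℓ + 1)) (tseq (2 * ℓ + 2)) := ⟨h1, h12.trans h2⟩
      have hm2 : y₂ ∈ Set.Icc (tseq (2 * ℓ + 1)) (tseq (2 * ℓ + 2)) := ⟨h1.trans h12, h2⟩
      rw [gOdd ℓ y₁ hm1, gOdd ℓ y₂ hm2]
      have := cos_one_sided (y₂ - tseq (2 * ℓ + 1) + Real.pi) (y₁ - tseq (2 * ℓ + 1) + Real.pi)
      have habs : |y₂ - tseq (2 * ℓ + 1) + Real.pi - (y₁ - tseq (2 * ℓ + 1) + Real.pi)|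
          = y₂ - y₁ := by
        rw [show y₂ - tseq (2 * ℓ + 1) + Real.pi - (y₁ - tseq (2 * ℓ + 1) + Real.pi)
            = y₂ - y₁ by ring]
        exact abs_of_nonneg (by linarith)
      rw [habs] at this
      linarith
  -- g is 1 on (-∞, 0]
  have gZero : ∀ y : ℝ, y ≤ 0 → g y = 1 := by
    intro y hy
    rcases lt_or_eq_of_le hy with h | h
    · exact hneg y h
    · subst h
      have h0 : tseq 0 = 0 := rfl
      have hmem : (0 : ℝ) ∈ Set.Ico (tseq (2 * 0)) (tseq (2 * 0 + 1)) := by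
        constructor
        · rw [show 2 * 0 = 0 by rfl, h0]
        · rw [show 2 * 0 = 0 by rfl]
          rw [← h0]
          exact tseq_lt_succ 0
      rw [heven 0 0 hmem]
      norm_num [show tseq (2 * 0) = (0:ℝ) from rfl, show tseq 0 = (0:ℝ) from rfl]
  -- chain: up to tseq k
  have chain : ∀ k : ℕ, ∀ y₁ y₂ : ℝ, y₁ ≤ y₂ → y₂ ≤ tseq k → g y₂ - g y₁ ≤ y₂ - y₁ := by
    intro k
    induction k with
    | zero =>
        intro y₁ y₂ h12 h2
        have h0 : tseq 0 = (0 : ℝ) := rfl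
        rw [h0] at h2
        rw [gZero y₂ h2, gZero y₁ (h12.trans h2)]
        linarith
    | succ n ih =>
        intro y₁ y₂ h12 h2
        rcases le_or_gt y₂ (tseq n) with h | h
        · exact ih y₁ y₂ h12 h
        · rcases le_or_gt (tseq n) y₁ with h' | h'
          · exact pieceKey n y₁ y₂ h' h12 h2
          · have s1 := ih y₁ (tseq n) h'.le le_rfl
            have s2 := pieceKey n (tseq n) y₂ le_rfl h.le h2
            linarith
  -- global one-sided Lipschitz
  have key : ∀ y₁ y₂ : ℝ, y₁ ≤ y₂ → g y₂ - g y₁ ≤ y₂ - y₁ := by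
    intro y₁ y₂ h12
    obtain ⟨k, hk⟩ := exists_nat_ge (y₂ / Real.pi)
    have hy2 : y₂ ≤ (k : ℝ) * Real.pi := by
      rw [div_le_iff₀ hπ] at hk
      linarith
    exact chain (2 * k) y₁ y₂ h12 (hy2.trans (tseq_lower k))
  intro y₁ y₂
  rcases le_total y₁ y₂ with h | h
  · have := key y₁ y₂ h
    nlinarith
  · have := key y₂ y₁ h
    nlinarith
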